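/- Let r, q_a, q_b : [0,∞)² → [0,∞) be Borel measurable, bounded on compact subsets of [0,∞)², and right-continuous. Then for every fixed (t,u) ∈ [0,∞)², lim_{h→0⁺} (1/h) ∫_t^{t+h} r(s, u+s−t) · exp(−∫_t^s q_a(v, u+v−t) dv) · exp(−∫_s^{t+h} q_b(v, v−s) dv) ds = r(t,u). (This is the analytic core of the proof that the intensities are the right derivatives of the transition probabilities: with r = q_{ij}, q_a = q_i, q_b = q_j, the integrand is the conditional density of making exactly one jump, from i to j, in (t, t+h].) -/

import Mathlib

set_option maxHeartbeats 1000000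

/-- Let `r, qa, qb : [0,∞)² → [0,∞)` be Borel measurable, bounded on compact subsets of
`[0,∞)²` and right-continuous. Then for every `(t,u) ∈ [0,∞)²`,
`(1/h) ∫_t^{t+h} r(s, u+s-t) exp(-∫_t^s qa(v, u+v-t) dv) exp(-∫_s^{t+h} qb(v, v-s) dv) ds`
tends to `r(t,u)` as `h → 0⁺`. -/
theorem one_jump_density_right_derivative
    (r qa qb : ℝ → ℝ → ℝ)
    (hrmeas : Measurable fun p : ℝ × ℝ => r p.1 p.2)
    (hqameas : Measurable fun p : ℝ × ℝ => qa p.1 p.2)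
    (hqbmeas : Measurable fun p : ℝ × ℝ => qb p.1 p.2)
    (hrnonneg : ∀ t u : ℝ, 0 ≤ t → 0 ≤ u → 0 ≤ r t u)
    (hqanonneg : ∀ t u : ℝ, 0 ≤ t → 0 ≤ u → 0 ≤ qa t u)
    (hqbnonneg : ∀ t u : ℝ, 0 ≤ t → 0 ≤ u → 0 ≤ qb t u)
    (hrbdd : ∀ K : Set (ℝ × ℝ), IsCompact K →
      ∃ M : ℝ, ∀ p ∈ K, 0 ≤ p.1 → 0 ≤ p.2 → r p.1 p.2 ≤ M)
    (hqabdd : ∀ K : Set (ℝ × ℝ), IsCompact K →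
      ∃ M : ℝ, ∀ p ∈ K, 0 ≤ p.1 → 0 ≤ p.2 → qa p.1 p.2 ≤ M)
    (hqbbdd : ∀ K : Set (ℝ × ℝ), IsCompact K →
      ∃ M : ℝ, ∀ p ∈ K, 0 ≤ p.1 → 0 ≤ p.2 → qb p.1 p.2 ≤ M)
    (hrrc : ∀ t u : ℝ, 0 ≤ t → 0 ≤ u → ∀ ε : ℝ, 0 < ε → ∃ δ : ℝ, 0 < δ ∧
      ∀ h k : ℝ, 0 ≤ h → h < δ → 0 ≤ k → k < δ → |r (t + h) (u + k) - r t u| < ε)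
    (hqarc : ∀ t u : ℝ, 0 ≤ t → 0 ≤ u → ∀ ε : ℝ, 0 < ε → ∃ δ : ℝ, 0 < δ ∧
      ∀ h k : ℝ, 0 ≤ h → h < δ → 0 ≤ k → k < δ → |qa (t + h) (u + k) - qa t u| < ε)
    (hqbrc : ∀ t u : ℝ, 0 ≤ t → 0 ≤ u → ∀ ε : ℝ, 0 < ε → ∃ δ : ℝ, 0 < δ ∧
      ∀ h k : ℝ, 0 ≤ h → h < δ → 0 ≤ k → k < δ → |qb (t + h) (u + k) - qb t u| < ε)
    (t u : ℝ) (ht : 0 ≤ t) (hu : 0 ≤ u) :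
    Filter.Tendsto (fun h : ℝ => (1 / h) *
        ∫ s in t..(t + h), r s (u + s - t)
          * Real.exp (-∫ v in t..s, qa v (u + v - t))
          * Real.exp (-∫ v in s..(t + h), qb v (v - s)))
      (nhdsWithin 0 (Set.Ioi 0)) (nhds (r t u)) := by
  rw [Metric.tendsto_nhdsWithin_nhds]
  intro ε hε
  set r0 := r t u with hr0def
  have hr0n : 0 ≤ r0 := hrnonneg t u ht hu
  set Ma := qa t u + 1 with hMadef
  set Mb := qb t 0 + 1 with hMbdef
  have hMa0 : 0 < Ma := by have := hqanonneg t u ht hu; simp only [hMadef]; linarith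
  have hMb0 : 0 < Mb := by have := hqbnonneg t 0 ht le_rfl; simp only [hMbdef]; linarith
  set M := Ma + Mb with hMdef
  have hM0 : 0 < M := by simp only [hMdef]; linarith
  clear_value r0 Ma Mb M
  obtain ⟨δr, hδrpos, hδr⟩ := hrrc t u ht hu (ε / 2) (by linarith)
  obtain ⟨δa, hδapos, hδa⟩ := hqarc t u ht hu 1 one_pos
  obtain ⟨δb, hδbpos, hδb⟩ := hqbrc t 0 ht le_rfl 1 one_pos
  have hden : 0 < 2 * (r0 * M + 1) := by nlinarith
  refine ⟨min (min δr δa) (min δb (ε / (2 * (r0 * M + 1)))), by positivity, ?_⟩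
  intro h hh hdist
  rw [Set.mem_Ioi] at hh
  rw [Real.dist_eq, sub_zero, abs_of_pos hh] at hdist
  have hhr : h < δr := lt_of_lt_of_le hdist ((min_le_left _ _).trans (min_le_left _ _))
  have hha : h < δa := lt_of_lt_of_le hdist ((min_le_left _ _).trans (min_le_right _ _))
  have hhb : h < δb := lt_of_lt_of_le hdist ((min_le_right _ _).trans (min_le_left _ _))
  have hhM : h < ε / (2 * (r0 * M + 1)) :=
    lt_of_lt_of_le hdist ((min_le_right _ _).trans (min_le_right _ _))
  have hth : t ≤ t + h := by linarith
  set ga : ℝ → ℝ := fun v => qa v (u + v - t) with hgadef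
  set A : ℝ → ℝ := fun s => ∫ v in t..s, ga v with hAdef
  set B : ℝ → ℝ := fun s => ∫ v in s..(t + h), qb v (v - s) with hBdef
  set f : ℝ → ℝ := fun s => r s (u + s - t) * Real.exp (-A s) * Real.exp (-B s) with hfdef
  clear_value ga A B f
  -- pointwise bounds on ga
  have hga_nonneg : ∀ v ∈ Set.Icc t (t + h), 0 ≤ ga v := by
    intro v hv
    rw [hgadef]
    exact hqanonneg v (u + v - t) (le_trans ht hv.1) (by linarith [hv.1])
  have hga_bd : ∀ v ∈ Set.Icc t (t + h), ga v ≤ Ma := by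
    intro v hv
    have h1 : 0 ≤ v - t := by linarith [hv.1]
    have h2 : v - t < δa := by linarith [hv.2]
    have key := hδa (v - t) (v - t) h1 h2 h1 h2
    have e1 : t + (v - t) = v := by ring
    have e2 : u + (v - t) = u + v - t := by ring
    rw [e1, e2] at key
    have := (abs_lt.1 key).2
    simp only [hgadef, hMadef]
    linarith
  -- bound on qb
  have hqb_nonneg : ∀ s ∈ Set.Icc t (t + h), ∀ v ∈ Set.Icc s (t + h), 0 ≤ qb v (v - s) := by
    intro s hs v hv
    exact hqbnonneg v (v - s) (le_trans (le_trans ht hs.1) hv.1) (by linarith [hv.1])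
  have hqb_bd : ∀ s ∈ Set.Icc t (t + h), ∀ v ∈ Set.Icc s (t + h), qb v (v - s) ≤ Mb := by
    intro s hs v hv
    have h1 : 0 ≤ v - t := by linarith [hs.1, hv.1]
    have h2 : v - t < δb := by linarith [hv.2]
    have h3 : 0 ≤ v - s := by linarith [hv.1]
    have h4 : v - s < δb := by linarith [hv.2, hs.1]
    have key := hδb (v - t) (v - s) h1 h2 h3 h4
    have e1 : t + (v - t) = v := by ring
    have e2 : (0 : ℝ) + (v - s) = v - s := by ring
    rw [e1, e2] at key
    have := (abs_lt.1 key).2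
    simp only [hMbdef]
    linarith
  -- bound on r
  have hr_bd : ∀ s ∈ Set.Icc t (t + h), |r s (u + s - t) - r0| ≤ ε / 2 := by
    intro s hs
    have h1 : 0 ≤ s - t := by linarith [hs.1]
    have h2 : s - t < δr := by linarith [hs.2]
    have key := hδr (s - t) (s - t) h1 h2 h1 h2
    have e1 : t + (s - t) = s := by ring
    have e2 : u + (s - t) = u + s - t := by ring
    rw [e1, e2] at key
    rw [hr0def]
    exact key.le
  -- A bounds
  have hA_nonneg : ∀ s ∈ Set.Icc t (t + h), 0 ≤ A s := by
    intro s hs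
    rw [hAdef]
    exact intervalIntegral.integral_nonneg hs.1
      (fun x hx => hga_nonneg x ⟨hx.1, le_trans hx.2 hs.2⟩)
  have hA_le : ∀ s ∈ Set.Icc t (t + h), A s ≤ Ma * h := by
    intro s hs
    have hb : ∀ x ∈ Set.uIoc t s, ‖ga x‖ ≤ Ma := by
      intro x hx
      rw [Set.uIoc_of_le hs.1] at hx
      have hx' : x ∈ Set.Icc t (t + h) := ⟨hx.1.le, le_trans hx.2 hs.2⟩
      rw [Real.norm_eq_abs, abs_of_nonneg (hga_nonneg x hx')]
      exact hga_bd x hx'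
    have := intervalIntegral.norm_integral_le_of_norm_le_const hb
    rw [Real.norm_eq_abs, ← congrFun hAdef s] at this
    have habs : |s - t| = s - t := abs_of_nonneg (by linarith [hs.1])
    rw [habs] at this
    calc A s ≤ |A s| := le_abs_self _
      _ ≤ Ma * (s - t) := this
      _ ≤ Ma * h := by
          apply mul_le_mul_of_nonneg_left _ hMa0.le
          linarith [hs.2]
  -- B bounds
  have hB_nonneg : ∀ s ∈ Set.Icc t (t + h), 0 ≤ B s := by
    intro s hs
    rw [hBdef]
    exact intervalIntegral.integral_nonneg hs.2 (fun x hx => hqb_nonneg s hs x hx)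
  have hB_le : ∀ s ∈ Set.Icc t (t + h), B s ≤ Mb * h := by
    intro s hs
    have hb : ∀ x ∈ Set.uIoc s (t + h), ‖qb x (x - s)‖ ≤ Mb := by
      intro x hx
      rw [Set.uIoc_of_le hs.2] at hx
      have hx' : x ∈ Set.Icc s (t + h) := ⟨hx.1.le, hx.2⟩
      rw [Real.norm_eq_abs, abs_of_nonneg (hqb_nonneg s hs x hx')]
      exact hqb_bd s hs x hx'
    have := intervalIntegral.norm_integral_le_of_norm_le_const hb
    rw [Real.norm_eq_abs, ← congrFun hBdef s] at this
    have habs : |t + h - s| = t + h - s := abs_of_nonneg (by linarith [hs.2])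
    rw [habs] at this
    calc B s ≤ |B s| := le_abs_self _
      _ ≤ Mb * (t + h - s) := this
      _ ≤ Mb * h := by
          apply mul_le_mul_of_nonneg_left _ hMb0.le
          linarith [hs.1]
  -- pointwise bound on f
  have hf_ptbd : ∀ s ∈ Set.Icc t (t + h), ‖f s - r0‖ ≤ ε / 2 + r0 * (M * h) := by
    intro s hs
    set E := Real.exp (-A s) * Real.exp (-B s) with hEdef
    have hE0 : 0 < E := mul_pos (Real.exp_pos _) (Real.exp_pos _)
    have hEexp : E = Real.exp (-(A s + B s)) := by
      rw [hEdef, ← Real.exp_add]; ring_nf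
    have hE1 : E ≤ 1 := by
      rw [hEexp]
      exact Real.exp_le_one_iff.2 (by linarith [hA_nonneg s hs, hB_nonneg s hs])
    have h1E : 1 - E ≤ A s + B s := by
      have := Real.add_one_le_exp (-(A s + B s))
      rw [← hEexp] at this
      linarith
    have hAB : A s + B s ≤ M * h := by
      have := hA_le s hs
      have := hB_le s hs
      simp only [hMdef]
      linarith [hA_le s hs, hB_le s hs]
    have hfE : f s = r s (u + s - t) * E := by
      simp only [hfdef, hEdef]; ring
    have hrb := hr_bd s hs
    rw [Real.norm_eq_abs, hfE]
    have hsplit : r s (u + s - t) * E - r0 = (r s (u + s - t) - r0) * E + r0 * (E - 1) := by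
      ring
    rw [hsplit]
    clear_value E
    calc |(r s (u + s - t) - r0) * E + r0 * (E - 1)|
        ≤ |(r s (u + s - t) - r0) * E| + |r0 * (E - 1)| := abs_add_le _ _
      _ = |r s (u + s - t) - r0| * E + r0 * (1 - E) := by
          rw [abs_mul (r s (u + s - t) - r0) E, abs_mul r0 (E - 1), abs_of_pos hE0,
            abs_of_nonneg hr0n, abs_sub_comm E 1,
            abs_of_nonneg (by linarith : (0:ℝ) ≤ 1 - E)]
      _ ≤ ε / 2 + r0 * (M * h) := by
          have h1 : |r s (u + s - t) - r0| * E ≤ (ε / 2) * 1 := by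
            apply mul_le_mul hrb hE1 hE0.le (by linarith)
          have h2 : r0 * (1 - E) ≤ r0 * (M * h) := by
            apply mul_le_mul_of_nonneg_left _ hr0n
            linarith
          linarith
  -- measurability
  have hga_meas : Measurable ga := by
    rw [hgadef]
    exact hqameas.comp (Measurable.prodMk measurable_id
      ((measurable_const.add measurable_id).sub measurable_const))
  have hrs_meas : Measurable fun s => r s (u + s - t) :=
    hrmeas.comp (Measurable.prodMk measurable_id
      ((measurable_const.add measurable_id).sub measurable_const))
  have hga_int : MeasureTheory.IntegrableOn ga (Set.Icc t (t + h)) := by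
    apply MeasureTheory.Measure.integrableOn_of_bounded (M := Ma)
      (isCompact_Icc.measure_lt_top).ne hga_meas.aestronglyMeasurable
    filter_upwards [MeasureTheory.ae_restrict_mem measurableSet_Icc] with x hx
    rw [Real.norm_eq_abs, abs_of_nonneg (hga_nonneg x hx)]
    exact hga_bd x hx
  have hA_cont : ContinuousOn A (Set.Icc t (t + h)) := by
    rw [hAdef]
    have := intervalIntegral.continuousOn_primitive_interval
      (a := t) (b := t + h) (f := ga) (μ := MeasureTheory.volume)
      (by rwa [Set.uIcc_of_le hth])
    rwa [Set.uIcc_of_le hth] at this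
  have hexpA : MeasureTheory.AEStronglyMeasurable (fun s => Real.exp (-A s))
      (MeasureTheory.volume.restrict (Set.Icc t (t + h))) := by
    exact ((Real.continuous_exp.comp continuous_neg).comp_continuousOn hA_cont
      ).aestronglyMeasurable measurableSet_Icc
  -- B measurability via product lemma
  set G : ℝ → ℝ := fun s => ∫ v, ({p : ℝ × ℝ | p.1 < p.2 ∧ p.2 ≤ t + h}.indicator
      (fun p : ℝ × ℝ => qb p.2 (p.2 - p.1)) (s, v)) with hGdef
  have hG_meas : MeasureTheory.StronglyMeasurable G := by
    apply MeasureTheory.StronglyMeasurable.integral_prod_right'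
    apply Measurable.stronglyMeasurable
    apply Measurable.indicator
    · exact hqbmeas.comp (Measurable.prodMk measurable_snd (measurable_snd.sub measurable_fst))
    · exact (measurableSet_lt measurable_fst measurable_snd).inter
        (measurableSet_le measurable_snd measurable_const)
  have hBG : ∀ s ∈ Set.Icc t (t + h), B s = G s := by
    intro s hs
    simp only [hBdef, hGdef]
    rw [intervalIntegral.integral_of_le hs.2,
      ← MeasureTheory.integral_indicator measurableSet_Ioc]
    apply MeasureTheory.integral_congr_ae
    apply Filter.Eventually.of_forall
    intro v
    simp only [Set.indicator_apply, Set.mem_Ioc, Set.mem_setOf_eq]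
  have hexpB : MeasureTheory.AEStronglyMeasurable (fun s => Real.exp (-B s))
      (MeasureTheory.volume.restrict (Set.Icc t (t + h))) := by
    have hGm : MeasureTheory.AEStronglyMeasurable (fun s => Real.exp (-G s))
        (MeasureTheory.volume.restrict (Set.Icc t (t + h))) :=
      (Real.measurable_exp.comp hG_meas.measurable.neg).aestronglyMeasurable
    apply hGm.congr
    filter_upwards [MeasureTheory.ae_restrict_mem measurableSet_Icc] with s hs
    rw [hBG s hs]
  have hf_meas : MeasureTheory.AEStronglyMeasurable f
      (MeasureTheory.volume.restrict (Set.Icc t (t + h))) := by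
    rw [hfdef]
    exact (hrs_meas.aestronglyMeasurable.mul hexpA).mul hexpB
  have hf_bdd : ∀ᵐ s ∂(MeasureTheory.volume.restrict (Set.Icc t (t + h))),
      ‖f s‖ ≤ r0 + ε / 2 := by
    filter_upwards [MeasureTheory.ae_restrict_mem measurableSet_Icc] with s hs
    have h1 := hr_bd s hs
    have hrn : 0 ≤ r s (u + s - t) := hrnonneg s (u + s - t) (le_trans ht hs.1)
      (by linarith [hs.1])
    have h2 : 0 ≤ f s := by
      rw [hfdef]
      exact mul_nonneg (mul_nonneg hrn (Real.exp_pos _).le) (Real.exp_pos _).le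
    have heA : Real.exp (-A s) ≤ 1 := Real.exp_le_one_iff.2 (by linarith [hA_nonneg s hs])
    have heB : Real.exp (-B s) ≤ 1 := Real.exp_le_one_iff.2 (by linarith [hB_nonneg s hs])
    have heA0 : 0 < Real.exp (-A s) := Real.exp_pos _
    have heB0 : 0 < Real.exp (-B s) := Real.exp_pos _
    rw [Real.norm_eq_abs, abs_of_nonneg h2]
    simp only [hfdef]
    have hru : r s (u + s - t) ≤ r0 + ε / 2 := by
      have := (abs_le.1 h1).2
      linarith
    nlinarith [mul_nonneg (mul_nonneg hrn heA0.le) (sub_nonneg.2 heB),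
      mul_nonneg hrn (sub_nonneg.2 heA)]
  have hf_Icc : MeasureTheory.IntegrableOn f (Set.Icc t (t + h)) :=
    ⟨hf_meas, MeasureTheory.HasFiniteIntegral.restrict_of_bounded _
      isCompact_Icc.measure_lt_top hf_bdd⟩
  have hf_int : IntervalIntegrable f MeasureTheory.volume t (t + h) :=
    (intervalIntegrable_iff_integrableOn_Ioc_of_le hth).2
      (hf_Icc.mono_set Set.Ioc_subset_Icc_self)
  have hnorm : |(∫ s in t..(t + h), f s) - r0 * h| ≤ (ε / 2 + r0 * (M * h)) * h := by
    have heq : (∫ s in t..(t + h), f s) - r0 * h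
        = ∫ s in t..(t + h), (f s - r0) := by
      rw [intervalIntegral.integral_sub hf_int intervalIntegrable_const,
        intervalIntegral.integral_const, smul_eq_mul]
      ring
    rw [heq, ← Real.norm_eq_abs]
    have hb : ∀ x ∈ Set.uIoc t (t + h), ‖f x - r0‖ ≤ ε / 2 + r0 * (M * h) := by
      intro x hx
      rw [Set.uIoc_of_le hth] at hx
      exact hf_ptbd x ⟨hx.1.le, hx.2⟩
    have := intervalIntegral.norm_integral_le_of_norm_le_const hb
    calc ‖∫ s in t..(t + h), (f s - r0)‖
        ≤ (ε / 2 + r0 * (M * h)) * |t + h - t| := this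
      _ = (ε / 2 + r0 * (M * h)) * h := by
          rw [show t + h - t = h by ring, abs_of_pos hh]
  have hne : h ≠ 0 := hh.ne'
  rw [Real.dist_eq]
  have hrw : (1 / h) * (∫ s in t..(t + h), f s) - r0
      = (1 / h) * ((∫ s in t..(t + h), f s) - r0 * h) := by
    field_simp
  rw [hrw, abs_mul, abs_of_pos (by positivity : (0:ℝ) < 1 / h)]
  have hle : (1 / h) * |(∫ s in t..(t + h), f s) - r0 * h|
      ≤ (1 / h) * ((ε / 2 + r0 * (M * h)) * h) := by
    apply mul_le_mul_of_nonneg_left hnorm (by positivity)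
  have heq2 : (1 / h) * ((ε / 2 + r0 * (M * h)) * h) = ε / 2 + r0 * (M * h) := by
    field_simp
  have hlast : r0 * (M * h) < ε / 2 := by
    have h2' : h * (2 * (r0 * M + 1)) < ε := (lt_div_iff₀ hden).1 hhM
    nlinarith
  calc (1 / h) * |(∫ s in t..(t + h), f s) - r0 * h|
      ≤ (1 / h) * ((ε / 2 + r0 * (M * h)) * h) := hle
    _ = ε / 2 + r0 * (M * h) := heq2
    _ < ε := by linarith
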